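/- arXiv:2001.09013 — 2 statements merged into one kernel-verified Lean document; each statement's English description precedes it below -/
import Mathlib

section
/- Under the hypotheses of the convergence theorem for the adaptive gradient method with a (δ, L, μ, m, V)-model, assume in addition that there is L > 0 with μ ≤ 2L and L_k ≤ 2L for all k = 1, …, N. Then, with q := (2L − μ)/(2L + m) and y_N := x_{j(N)} where j(N) minimizes f_δ(x_k) over k = 1, …, N, one has f(y_N) − f(x⋆) ≤ min{(2L + m)/N, (2L + m)·q^N}·V[x₀](x⋆) + δ̃ + 3δ. -/
open RealInnerProductSpace Finset Filter Topology

/-- The Bregman divergence `V[y](x) = d(x) - d(y) - ⟪∇d(y), x - y⟫` generated by `d`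
with gradient map `Dd`. -/
noncomputable def breg {E : Type*} [NormedAddCommGroup E] [InnerProductSpace ℝ E]
    (d : E → ℝ) (Dd : E → E) (y x : E) : ℝ :=
  d x - d y - ⟪Dd y, x - y⟫

/-- `g` is a subgradient of `ψ` at `z` (relative to the set `Q`). -/
def IsSubgradOn {E : Type*} [NormedAddCommGroup E] [InnerProductSpace ℝ E]
    (Q : Set E) (ψ : E → ℝ) (z g : E) : Prop :=
  ∀ x ∈ Q, ψ z + ⟪g, x - z⟫ ≤ ψ x

/-- `ψ` is `m`-strongly convex relative to `d` on `Q`, where `V` is the Bregman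
divergence generated by `d`. -/
def StrongRelConvexOn {E : Type*} [NormedAddCommGroup E] [InnerProductSpace ℝ E]
    (Q : Set E) (V : E → E → ℝ) (m : ℝ) (ψ : E → ℝ) : Prop :=
  ∀ z ∈ Q, ∀ g : E, IsSubgradOn Q ψ z g → ∀ x ∈ Q, ψ z + ⟪g, x - z⟫ + m * V z x ≤ ψ x

/-- `y` is a `δ`-approximate minimizer of `Ψ` on `Q`: there exists a subgradient `h`
of `Ψ` at `y` such that `⟪h, x - y⟫ ≥ -δ` for all `x ∈ Q`. -/
def IsApproxMinOn {E : Type*} [NormedAddCommGroup E] [InnerProductSpace ℝ E]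
    (Q : Set E) (Ψ : E → ℝ) (δ : ℝ) (y : E) : Prop :=
  y ∈ Q ∧ ∃ h : E, IsSubgradOn Q Ψ y h ∧ ∀ x ∈ Q, -δ ≤ ⟪h, x - y⟫

section Aux
variable {E : Type*} [NormedAddCommGroup E] [InnerProductSpace ℝ E] [CompleteSpace E]

/-- directional slope tendsto -/
lemma slope_tendsto_grad (d : E → ℝ) (Dd : E → E) (hd : ∀ x, HasGradientAt d (Dd x) x)
    (z v : E) :
    Tendsto (fun t : ℝ => (d (z + t • v) - d z) / t) (nhdsWithin 0 (Set.Ioi 0))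
      (nhds ⟪Dd z, v⟫) := by
  have hc : HasDerivAt (fun t : ℝ => z + t • v) v 0 := by
    simpa using ((hasDerivAt_id (0 : ℝ)).smul_const v).const_add z
  have hF : HasFDerivAt d (InnerProductSpace.toDual ℝ E (Dd z)) z := (hd z).hasFDerivAt
  have hF' : HasFDerivAt d (InnerProductSpace.toDual ℝ E (Dd z)) ((fun t : ℝ => z + t • v) 0) := by
    simpa using hF
  have hcomp : HasDerivAt (fun t : ℝ => d (z + t • v)) ⟪Dd z, v⟫ 0 := by
    have := hF'.comp_hasDerivAt 0 hc
    simpa [InnerProductSpace.toDual_apply_apply, Function.comp_def] using this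
  have := hasDerivAt_iff_tendsto_slope.1 hcomp
  have h2 : Tendsto (slope (fun t : ℝ => d (z + t • v)) 0) (nhdsWithin 0 (Set.Ioi 0))
      (nhds ⟪Dd z, v⟫) := this.mono_left (nhdsWithin_mono _ (fun t ht => by
    simp only [Set.mem_compl_iff, Set.mem_singleton_iff]
    exact ne_of_gt ht))
  refine h2.congr (fun t => ?_)
  simp [slope_def_field, div_eq_inv_mul]

/-- gradient inequality for convex functions -/
lemma grad_ineq (d : E → ℝ) (Dd : E → E) (hconv : ConvexOn ℝ Set.univ d)
    (hd : ∀ x, HasGradientAt d (Dd x) x) (z u : E) :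
    d z + ⟪Dd z, u - z⟫ ≤ d u := by
  have hT := slope_tendsto_grad d Dd hd z (u - z)
  have hev : ∀ᶠ t in nhdsWithin (0:ℝ) (Set.Ioi 0),
      (d (z + t • (u - z)) - d z) / t ≤ d u - d z := by
    filter_upwards [Ioc_mem_nhdsGT_of_mem (Set.mem_Ico.2 ⟨le_refl (0:ℝ), one_pos⟩)]
      with t ht
    obtain ⟨ht0, ht1⟩ := ht
    have hcvx := hconv.2 (Set.mem_univ z) (Set.mem_univ u) (by linarith : (0:ℝ) ≤ 1 - t)
      (le_of_lt ht0) (by ring)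
    have heq : (1 - t) • z + t • u = z + t • (u - z) := by
      simp [smul_sub, sub_smul]; abel
    rw [heq] at hcvx
    simp only [smul_eq_mul] at hcvx
    rw [div_le_iff₀ ht0]
    nlinarith
  have := le_of_tendsto hT hev
  linarith

lemma breg_nonneg (d : E → ℝ) (Dd : E → E) (hconv : ConvexOn ℝ Set.univ d)
    (hd : ∀ x, HasGradientAt d (Dd x) x) (z u : E) : 0 ≤ breg d Dd z u := by
  have := grad_ineq d Dd hconv hd z u
  simp only [breg]; linarith

/-- three point identity -/
lemma breg_three_point (d : E → ℝ) (Dd : E → E) (a z u : E) :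
    breg d Dd a u = breg d Dd a z + ⟪Dd z - Dd a, u - z⟫ + breg d Dd z u := by
  simp only [breg, inner_sub_left]
  have h1 : ⟪Dd a, u - a⟫ = ⟪Dd a, u - z⟫ + ⟪Dd a, z - a⟫ := by
    rw [← inner_add_right, sub_add_sub_cancel]
  rw [h1]; ring

/-- a vector satisfying the subgradient inequality up to a Bregman error term is a
subgradient. -/
lemma subgrad_of_breg_slack (Q : Set E) (hQ : Convex ℝ Q) (d : E → ℝ) (Dd : E → E)
    (hd : ∀ x, HasGradientAt d (Dd x) x)
    (ψ : E → ℝ) (hψ : ConvexOn ℝ Q ψ) (z : E) (hz : z ∈ Q) (g : E) (Lc : ℝ) (hLc : 0 ≤ Lc)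
    (hineq : ∀ u ∈ Q, ψ z + ⟪g, u - z⟫ - Lc * breg d Dd z u ≤ ψ u) :
    IsSubgradOn Q ψ z g := by
  intro u hu
  have hT := slope_tendsto_grad d Dd hd z (u - z)
  have hT' : Tendsto (fun t : ℝ => Lc * ((d (z + t • (u - z)) - d z) / t - ⟪Dd z, u - z⟫))
      (nhdsWithin 0 (Set.Ioi 0)) (nhds 0) := by
    have := (hT.sub_const ⟪Dd z, u - z⟫).const_mul Lc
    simpa using this
  have hev : ∀ᶠ t in nhdsWithin (0:ℝ) (Set.Ioi 0),
      ψ z + ⟪g, u - z⟫ - ψ u ≤ Lc * ((d (z + t • (u - z)) - d z) / t - ⟪Dd z, u - z⟫) := by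
    filter_upwards [Ioc_mem_nhdsGT_of_mem (Set.mem_Ico.2 ⟨le_refl (0:ℝ), one_pos⟩)]
      with t ht
    obtain ⟨ht0, ht1⟩ := ht
    set w := z + t • (u - z) with hw
    have hwQ : w ∈ Q := by
      have := hQ hz hu (by linarith : (0:ℝ) ≤ 1 - t) (le_of_lt ht0) (by ring)
      have heq : (1 - t) • z + t • u = w := by simp [hw, smul_sub, sub_smul]; abel
      rwa [heq] at this
    have h1 := hineq w hwQ
    have hcvx := hψ.2 hz hu (by linarith : (0:ℝ) ≤ 1 - t) (le_of_lt ht0) (by ring)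
    have heq : (1 - t) • z + t • u = w := by simp [hw, smul_sub, sub_smul]; abel
    rw [heq] at hcvx
    have hinw : ⟪g, w - z⟫ = t * ⟪g, u - z⟫ := by
      simp [hw, real_inner_smul_right]
    have hbw : breg d Dd z w = d w - d z - t * ⟪Dd z, u - z⟫ := by
      simp [breg, hw, real_inner_smul_right]
    rw [hinw, hbw] at h1
    rw [show Lc * ((d w - d z) / t - ⟪Dd z, u - z⟫)
        = Lc * (d w - d z - t * ⟪Dd z, u - z⟫) / t by field_simp]
    simp only [smul_eq_mul] at hcvx
    rw [le_div_iff₀ ht0]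
    nlinarith
  have := ge_of_tendsto hT' hev
  linarith

end Aux

set_option maxHeartbeats 1000000 in
/-- Remark 3.3: convergence rate of the adaptive gradient method with a
`(δ, L, μ, m, V)`-model when all the adaptive constants satisfy `L_k ≤ 2L`. -/
theorem stmt5
    {E : Type*} [NormedAddCommGroup E] [InnerProductSpace ℝ E] [FiniteDimensional ℝ E]
    (Q : Set E) (hQ : Convex ℝ Q)
    (d : E → ℝ) (Dd : E → E)
    (hd_conv : ConvexOn ℝ Set.univ d) (hd_diff : ∀ x, HasGradientAt d (Dd x) x)
    (f : E → ℝ) (μ m δ δt : ℝ)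
    (hμ : 0 ≤ μ) (hm : 0 ≤ m) (hδ : 0 ≤ δ) (hδt : 0 ≤ δt)
    (N : ℕ) (hN : 1 ≤ N)
    (x : ℕ → E) (hxQ : ∀ k ≤ N, x k ∈ Q)
    (L : ℕ → ℝ) (hL : ∀ k, 1 ≤ k → k ≤ N → 0 < L k)
    (Lb : ℝ) (hLb : 0 < Lb) (hμLb : μ ≤ 2 * Lb)
    (hLle : ∀ k, 1 ≤ k → k ≤ N → L k ≤ 2 * Lb)
    (fδ : ℕ → ℝ) (ψ : ℕ → E → ℝ)
    (hψ_conv : ∀ k < N, ConvexOn ℝ Q (ψ k))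
    (hψ0 : ∀ k < N, ψ k (x k) = 0)
    (hψ_strong : ∀ k < N, StrongRelConvexOn Q (breg d Dd) m (ψ k))
    (ha : ∀ k < N, ∀ u ∈ Q, μ * breg d Dd (x k) u ≤ f u - fδ k - ψ k u)
    (hb : ∀ k ≤ N, f (x k) - δ ≤ fδ k ∧ fδ k ≤ f (x k))
    (hc : ∀ k < N,
      IsApproxMinOn Q (fun u => ψ k u + L (k + 1) * breg d Dd (x k) u) δt (x (k + 1)))
    (hd_ls : ∀ k < N,
      fδ (k + 1) ≤ fδ k + ψ k (x (k + 1)) + L (k + 1) * breg d Dd (x k) (x (k + 1)) + δ)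
    (xs : E) (hxs : xs ∈ Q) (hmin : ∀ u ∈ Q, f xs ≤ f u)
    (jN : ℕ) (hjN : jN ∈ Finset.Icc 1 N)
    (hjmin : ∀ k ∈ Finset.Icc 1 N, fδ jN ≤ fδ k) :
    f (x jN) - f xs ≤
      min ((2 * Lb + m) / N) ((2 * Lb + m) * ((2 * Lb - μ) / (2 * Lb + m)) ^ N)
          * breg d Dd (x 0) xs
        + δt + 3 * δ := by
  obtain ⟨hjN1, hjNle⟩ := Finset.mem_Icc.1 hjN
  set q : ℝ := (2 * Lb - μ) / (2 * Lb + m) with hqdef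
  have hden : (0:ℝ) < 2 * Lb + m := by linarith
  have hq0 : 0 ≤ q := div_nonneg (by linarith) (le_of_lt hden)
  have hq1 : q ≤ 1 := by
    rw [hqdef, div_le_one hden]; linarith
  set R : ℕ → ℝ := fun k => breg d Dd (x k) xs with hRdef
  have hRnn : ∀ k, 0 ≤ R k := fun k => breg_nonneg d Dd hd_conv hd_diff _ _
  -- key one-step inequality
  have key : ∀ k < N, fδ (k + 1) - f xs - δt - δ ≤ (L (k + 1) + m) * (q * R k - R (k + 1)) := by
    intro k hk
    obtain ⟨hzQ, h, hsub, happ⟩ := hc k hk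
    set z := x (k + 1) with hzdef
    set Lk := L (k + 1) with hLkdef
    have hLk : 0 < Lk := hL (k + 1) (by omega) (by omega)
    have hLk2 : Lk ≤ 2 * Lb := hLle (k + 1) (by omega) (by omega)
    set g := h - Lk • (Dd z - Dd (x k)) with hgdef
    have hkQ : x k ∈ Q := hxQ k (by omega)
    have hineq : ∀ u ∈ Q, ψ k z + ⟪g, u - z⟫ - Lk * breg d Dd z u ≤ ψ k u := by
      intro u hu
      have h1 := hsub u hu
      simp only at h1
      have h3 := breg_three_point d Dd (x k) z u
      have hg : ⟪g, u - z⟫ = ⟪h, u - z⟫ - Lk * ⟪Dd z - Dd (x k), u - z⟫ := by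
        simp [hgdef, inner_sub_left, real_inner_smul_left]
      rw [hg]; nlinarith [hsub u hu]
    have hgsub : IsSubgradOn Q (ψ k) z g :=
      subgrad_of_breg_slack Q hQ d Dd hd_diff (ψ k) (hψ_conv k hk) z hzQ g Lk
        (le_of_lt hLk) hineq
    have hstrong := hψ_strong k hk z hzQ g hgsub xs hxs
    have h3 := breg_three_point d Dd (x k) z xs
    have hgx : ⟪g, xs - z⟫ = ⟪h, xs - z⟫ - Lk * ⟪Dd z - Dd (x k), xs - z⟫ := by
      simp [hgdef, inner_sub_left, real_inner_smul_left]
    have happx := happ xs hxs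
    have hdl := hd_ls k hk
    have hax := ha k hk xs hxs
    -- main inequality: fδ (k+1) ≤ f xs + (Lk - μ) * R k - (m + Lk) * R (k+1) + δt + δ
    have hmain : fδ (k + 1) ≤ f xs + (Lk - μ) * R k - (m + Lk) * R (k + 1) + δt + δ := by
      rw [hgx] at hstrong
      simp only [hRdef]
      nlinarith [hRnn k, breg_nonneg d Dd hd_conv hd_diff z xs]
    have hcoef : Lk - μ ≤ q * (Lk + m) := by
      rw [hqdef, div_mul_eq_mul_div, le_div_iff₀ hden]
      nlinarith
    have hcoef2 : (Lk - μ) * R k ≤ q * (Lk + m) * R k :=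
      mul_le_mul_of_nonneg_right hcoef (hRnn k)
    simp only [hLkdef] at hmain hcoef2 ⊢
    nlinarith
  have hfδj : f (x jN) - δ ≤ fδ jN := (hb jN hjNle).1
  have hmin_nn : 0 ≤ min ((2 * Lb + m) / N) ((2 * Lb + m) * q ^ N) * breg d Dd (x 0) xs := by
    apply mul_nonneg _ (breg_nonneg d Dd hd_conv hd_diff _ _)
    apply le_min
    · positivity
    · positivity
  by_cases hF : fδ jN - f xs - δt - δ ≤ 0
  · linarith
  push_neg at hF
  set F := fδ jN - f xs - δt - δ with hFdef
  have hFk : ∀ k < N, F ≤ (L (k + 1) + m) * (q * R k - R (k + 1)) := by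
    intro k hk
    have hj := hjmin (k + 1) (Finset.mem_Icc.2 ⟨by omega, by omega⟩)
    have := key k hk
    simp only [hFdef]; linarith
  have hLpos : ∀ k < N, 0 < L (k + 1) + m := fun k hk =>
    lt_of_lt_of_le (hL (k + 1) (by omega) (by omega)) (by linarith)
  have hgap : ∀ k < N, 0 < q * R k - R (k + 1) := by
    intro k hk
    have h1 := hFk k hk
    have h2 := hLpos k hk
    nlinarith
  have hF2 : ∀ k < N, F ≤ (2 * Lb + m) * (q * R k - R (k + 1)) := by
    intro k hk
    refine le_trans (hFk k hk) (mul_le_mul_of_nonneg_right ?_ (le_of_lt (hgap k hk)))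
    have := hLle (k + 1) (by omega) (by omega)
    linarith
  have hgeom : ∀ k, k ≤ N → R k ≤ q ^ k * R 0 := by
    intro k
    induction k with
    | zero => intro _; simp
    | succ n ih =>
      intro hn
      have h1 := hgap n (by omega)
      have h2 := ih (by omega)
      have : R (n + 1) ≤ q * R n := le_of_lt (by linarith)
      calc R (n + 1) ≤ q * R n := this
        _ ≤ q * (q ^ n * R 0) := mul_le_mul_of_nonneg_left h2 hq0
        _ = q ^ (n + 1) * R 0 := by ring
  -- 1/N rate
  have hsum : (N : ℝ) * F ≤ (2 * Lb + m) * R 0 := by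
    have h1 : (N : ℝ) * F = ∑ _k ∈ Finset.range N, F := by
      rw [Finset.sum_const, Finset.card_range, nsmul_eq_mul]
    have h2 : ∑ _k ∈ Finset.range N, F ≤ ∑ k ∈ Finset.range N, (2 * Lb + m) * (R k - R (k + 1)) := by
      apply Finset.sum_le_sum
      intro k hk
      have hk' : k < N := Finset.mem_range.1 hk
      refine le_trans (hF2 k hk') ?_
      have h5 : q * R k ≤ R k := mul_le_of_le_one_left (hRnn k) hq1
      exact mul_le_mul_of_nonneg_left (by linarith) (le_of_lt hden)
    have h3 : ∑ k ∈ Finset.range N, (2 * Lb + m) * (R k - R (k + 1))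
        = (2 * Lb + m) * (R 0 - R N) := by
      rw [← Finset.mul_sum, Finset.sum_range_sub' R]
    rw [h1]
    rw [h3] at h2
    nlinarith [hRnn N]
  have hrate1 : F ≤ (2 * Lb + m) / N * breg d Dd (x 0) xs := by
    rw [div_mul_eq_mul_div, le_div_iff₀ (by exact_mod_cast Nat.cast_pos.2 (by omega))]
    calc F * N = (N : ℝ) * F := by ring
      _ ≤ (2 * Lb + m) * R 0 := hsum
      _ = (2 * Lb + m) * breg d Dd (x 0) xs := rfl
  -- geometric rate
  obtain ⟨M, rfl⟩ : ∃ M, N = M + 1 := ⟨N - 1, by omega⟩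
  have hrate2 : F ≤ (2 * Lb + m) * q ^ (M + 1) * breg d Dd (x 0) xs := by
    have h1 := hF2 M (by omega)
    have h2 := hgeom M (by omega)
    have h3 := hRnn (M + 1)
    have h4 : q * R M ≤ q * (q ^ M * R 0) := mul_le_mul_of_nonneg_left h2 hq0
    calc F ≤ (2 * Lb + m) * (q * R M - R (M + 1)) := h1
      _ ≤ (2 * Lb + m) * (q * (q ^ M * R 0)) := by nlinarith
      _ = (2 * Lb + m) * q ^ (M + 1) * breg d Dd (x 0) xs := by ring
  have hminle : F ≤ min ((2 * Lb + m) / (M + 1 : ℕ)) ((2 * Lb + m) * q ^ (M + 1))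
      * breg d Dd (x 0) xs := by
    rcases min_cases ((2 * Lb + m) / (M + 1 : ℕ)) ((2 * Lb + m) * q ^ (M + 1)) with
      ⟨heq, _⟩ | ⟨heq, _⟩ <;> rw [heq]
    · exact hrate1
    · exact hrate2
  simp only [hFdef] at hminle
  linarith
end

section
/- Let δ, δ̃ ≥ 0, N ≥ 1, and let ψ_δ : Q × Q → ℝ be convex in its first argument with ψ_δ(x, x) = 0 for all x ∈ Q. Let z₀, …, z_N ∈ Q, w₀, …, w_{N−1} ∈ Q and L₁, …, L_N > 0 be such that for each k = 0, …, N−1: (a) w_k is a δ̃-approximate minimizer on Q of x ↦ ψ_δ(x, z_k) + L_{k+1}·V[z_k](x); (b) z_{k+1} is a δ̃-approximate minimizer on Q of x ↦ ψ_δ(x, w_k) + L_{k+1}·V[z_k](x); (c) ψ_δ(z_{k+1}, z_k) ≤ ψ_δ(z_{k+1}, w_k) + ψ_δ(w_k, z_k) + L_{k+1}·(V[z_k](w_k) + V[w_k](z_{k+1})) + δ. Then, with S_N := ∑_{k=0}^{N−1} 1/L_{k+1}, for every x ∈ Q: −(1/S_N)·∑_{k=0}^{N−1} ψ_δ(x,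 w_k)/L_{k+1} ≤ V[z₀](x)/S_N + δ + 2·δ̃. -/
open RealInnerProductSpace Finset

lemma slope_tendsto {E : Type*} [NormedAddCommGroup E] [InnerProductSpace ℝ E]
    [CompleteSpace E]
    (f : E → ℝ) (g u v : E) (hf : HasGradientAt f g u) :
    Filter.Tendsto (fun t : ℝ => (f (u + t • v) - f u) / t) (nhdsWithin 0 (Set.Ioi 0))
      (nhds ⟪g, v⟫) := by
  have hline : HasDerivAt (fun t : ℝ => u + t • v) v 0 := by
    simpa using ((hasDerivAt_id (0:ℝ)).smul_const v).const_add u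
  have hφ : HasDerivAt (fun t : ℝ => f (u + t • v)) ⟪g, v⟫ 0 := by
    have hf' : HasFDerivAt f ((InnerProductSpace.toDual ℝ E) g) (u + (0:ℝ) • v) := by
      simpa using hasGradientAt_iff_hasFDerivAt.mp hf
    have := hf'.comp_hasDerivAt (x := (0:ℝ)) (f := fun t : ℝ => u + t • v) hline
    simp only [InnerProductSpace.toDual_apply_apply] at this
    exact this
  have h2 := hasDerivAt_iff_tendsto_slope.mp hφ
  have h3 := h2.mono_left (nhdsWithin_mono 0 (by intro t ht; exact ne_of_gt ht))
  refine h3.congr' ?_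
  filter_upwards [self_mem_nhdsWithin] with t ht
  simp [slope_def_field, div_eq_inv_mul]

lemma inner_ge_of_slope {E : Type*} [NormedAddCommGroup E] [InnerProductSpace ℝ E]
    [CompleteSpace E]
    (f : E → ℝ) (g u v : E) (c : ℝ) (hf : HasGradientAt f g u)
    (h : ∀ t : ℝ, t ∈ Set.Ioc (0:ℝ) 1 → c * t ≤ f (u + t • v) - f u) :
    c ≤ ⟪g, v⟫ := by
  refine ge_of_tendsto (slope_tendsto f g u v hf) ?_
  filter_upwards [Ioc_mem_nhdsGT_of_mem (by norm_num : (0:ℝ) ∈ Set.Ico (0:ℝ) 1)] with t ht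
  exact (le_div_iff₀ (ht.1)).mpr (by simpa [mul_comm] using h t ht)

lemma inner_le_of_slope {E : Type*} [NormedAddCommGroup E] [InnerProductSpace ℝ E]
    [CompleteSpace E]
    (f : E → ℝ) (g u v : E) (c : ℝ) (hf : HasGradientAt f g u)
    (h : ∀ t : ℝ, t ∈ Set.Ioc (0:ℝ) 1 → f (u + t • v) - f u ≤ c * t) :
    ⟪g, v⟫ ≤ c := by
  refine le_of_tendsto (slope_tendsto f g u v hf) ?_
  filter_upwards [Ioc_mem_nhdsGT_of_mem (by norm_num : (0:ℝ) ∈ Set.Ico (0:ℝ) 1)] with t ht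
  exact (div_le_iff₀ (ht.1)).mpr (by simpa [mul_comm] using h t ht)

lemma breg_nonneg_s11 {E : Type*} [NormedAddCommGroup E] [InnerProductSpace ℝ E]
    [CompleteSpace E] (d : E → ℝ) (Dd : E → E)
    (hd_conv : ConvexOn ℝ Set.univ d) (hd_diff : ∀ x, HasGradientAt d (Dd x) x)
    (y x : E) : 0 ≤ breg d Dd y x := by
  have h := inner_le_of_slope d (Dd y) y (x - y) (d x - d y) (hd_diff y) ?_
  · simp only [breg]; linarith
  · intro t ht
    have := hd_conv.2 (Set.mem_univ y) (Set.mem_univ x) (by linarith [ht.1, ht.2] : 0 ≤ 1 - t)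
      (le_of_lt ht.1) (by ring)
    have e : y + t • (x - y) = (1 - t) • y + t • x := by module
    rw [e]
    simp only [smul_eq_mul] at this
    linarith

lemma key_lemma {E : Type*} [NormedAddCommGroup E] [InnerProductSpace ℝ E]
    [CompleteSpace E] (Q : Set E) (hQ : Convex ℝ Q)
    (d : E → ℝ) (Dd : E → E) (hd_diff : ∀ x, HasGradientAt d (Dd x) x)
    (ψ : E → ℝ) (hψ : ConvexOn ℝ Q ψ) (zz u : E) (hu : u ∈ Q) (L : ℝ) (hL : 0 < L)
    (h : E) (hsub : IsSubgradOn Q (fun x => ψ x + L * breg d Dd zz x) u h) :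
    ∀ x ∈ Q, ψ u + L * breg d Dd zz u + ⟪h, x - u⟫ + L * breg d Dd u x
      ≤ ψ x + L * breg d Dd zz x := by
  intro x hx
  set v := x - u with hv
  have hc : (⟪h, v⟫ - ψ x + ψ u) / L + ⟪Dd zz, v⟫ ≤ ⟪Dd u, v⟫ := by
    apply inner_ge_of_slope d (Dd u) u v _ (hd_diff u)
    intro t ht
    have hxt : u + t • v ∈ Q := by
      have e : u + t • v = (1 - t) • u + t • x := by rw [hv]; module
      rw [e]
      exact hQ hu hx (by linarith [ht.1, ht.2]) (le_of_lt ht.1) (by ring)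
    have h1 := hsub (u + t • v) hxt
    simp only at h1
    have h2 : ψ (u + t • v) ≤ (1 - t) * ψ u + t * ψ x := by
      have e : u + t • v = (1 - t) • u + t • x := by rw [hv]; module
      rw [e]
      simpa using hψ.2 hu hx (by linarith [ht.1, ht.2] : (0:ℝ) ≤ 1 - t)
        (le_of_lt ht.1) (by ring)
    have e1 : ⟪h, u + t • v - u⟫ = t * ⟪h, v⟫ := by
      rw [show u + t • v - u = t • v by abel, real_inner_smul_right]
    have e2 : ⟪Dd zz, u + t • v - zz⟫ = t * ⟪Dd zz, v⟫ + ⟪Dd zz, u - zz⟫ := by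
      rw [show u + t • v - zz = t • v + (u - zz) by abel, inner_add_right,
        real_inner_smul_right]
    simp only [breg] at h1 ⊢
    rw [e1, e2] at h1
    rw [div_add' _ _ _ (ne_of_gt hL), div_mul_eq_mul_div, div_le_iff₀ hL]
    nlinarith [ht.1]
  have hs := hsub x hx
  simp only at hs
  have e3 : ⟪Dd zz, x - zz⟫ = ⟪Dd zz, v⟫ + ⟪Dd zz, u - zz⟫ := by
    rw [← inner_add_right]; congr 1; rw [hv]; abel
  simp only [breg]
  rw [div_add' _ _ _ (ne_of_gt hL), div_le_iff₀ hL] at hc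
  rw [e3]
  nlinarith

/-- Theorem 4.5, first inequality: aggregate guarantee of the generalized
Mirror-Prox method for an abstract variational inequality with a `(δ, L, V)`-model. -/
theorem stmt11
    {E : Type*} [NormedAddCommGroup E] [InnerProductSpace ℝ E] [FiniteDimensional ℝ E]
    (Q : Set E) (hQ : Convex ℝ Q)
    (d : E → ℝ) (Dd : E → E)
    (hd_conv : ConvexOn ℝ Set.univ d) (hd_diff : ∀ x, HasGradientAt d (Dd x) x)
    (ψδ : E → E → ℝ)
    (hconv : ∀ y ∈ Q, ConvexOn ℝ Q fun x => ψδ x y)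
    (hzero : ∀ x ∈ Q, ψδ x x = 0)
    (δ δt : ℝ) (hδ : 0 ≤ δ) (hδt : 0 ≤ δt)
    (N : ℕ) (hN : 1 ≤ N)
    (z w : ℕ → E) (L : ℕ → ℝ)
    (hzQ : ∀ k ≤ N, z k ∈ Q) (hwQ : ∀ k < N, w k ∈ Q)
    (hLpos : ∀ k < N, 0 < L (k + 1))
    (hwmin : ∀ k < N,
      IsApproxMinOn Q (fun x => ψδ x (z k) + L (k + 1) * breg d Dd (z k) x) δt (w k))
    (hzmin : ∀ k < N,
      IsApproxMinOn Q (fun x => ψδ x (w k) + L (k + 1) * breg d Dd (z k) x) δt (z (k + 1)))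
    (hls : ∀ k < N,
      ψδ (z (k + 1)) (z k) ≤ ψδ (z (k + 1)) (w k) + ψδ (w k) (z k)
        + L (k + 1) * (breg d Dd (z k) (w k) + breg d Dd (w k) (z (k + 1))) + δ) :
    ∀ x ∈ Q,
      -(1 / ∑ k ∈ Finset.range N, 1 / L (k + 1))
          * ∑ k ∈ Finset.range N, ψδ x (w k) / L (k + 1) ≤
        breg d Dd (z 0) x / (∑ k ∈ Finset.range N, 1 / L (k + 1)) + δ + 2 * δt := by
  intro x hx
  set B : E → E → ℝ := breg d Dd with hB
  -- per-step inequality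
  have step : ∀ k < N, -(ψδ x (w k) / L (k + 1)) ≤
      (B (z k) x - B (z (k + 1)) x) + (δ + 2 * δt) * (1 / L (k + 1)) := by
    intro k hk
    have hLk := hLpos k hk
    have hzk := hzQ k (le_of_lt hk)
    have hzk1 := hzQ (k + 1) hk
    have hwk := hwQ k hk
    obtain ⟨-, ha, hasub, hain⟩ := hwmin k hk
    obtain ⟨-, hb, hbsub, hbin⟩ := hzmin k hk
    have hA := key_lemma Q hQ d Dd hd_diff (fun y => ψδ y (z k)) (hconv (z k) hzk)
      (z k) (w k) hwk _ hLk ha hasub (z (k + 1)) hzk1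
    have hB' := key_lemma Q hQ d Dd hd_diff (fun y => ψδ y (w k)) (hconv (w k) hwk)
      (z k) (z (k + 1)) hzk1 _ hLk hb hbsub x hx
    have hain' := hain (z (k + 1)) hzk1
    have hbin' := hbin x hx
    have hc := hls k hk
    have hkey : L (k + 1) * B (z (k + 1)) x - L (k + 1) * B (z k) x - δ - 2 * δt
        ≤ ψδ x (w k) := by
      simp only [hB] at *
      linarith
    rw [neg_le, le_div_iff₀ hLk]
    have e : (1 / L (k + 1)) * L (k + 1) = 1 := by
      field_simp
    nlinarith [hkey, e, hLk]
  -- sum over k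
  have hsum : -(∑ k ∈ Finset.range N, ψδ x (w k) / L (k + 1)) ≤
      B (z 0) x + (δ + 2 * δt) * ∑ k ∈ Finset.range N, 1 / L (k + 1) := by
    have h1 : ∑ k ∈ Finset.range N, -(ψδ x (w k) / L (k + 1)) ≤
        ∑ k ∈ Finset.range N, ((B (z k) x - B (z (k + 1)) x) + (δ + 2 * δt) * (1 / L (k + 1))) :=
      Finset.sum_le_sum fun k hk => step k (Finset.mem_range.mp hk)
    rw [Finset.sum_add_distrib, Finset.sum_range_sub' (fun k => B (z k) x), ← Finset.mul_sum]
      at h1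
    have h0 : 0 ≤ B (z N) x := breg_nonneg_s11 d Dd hd_conv hd_diff _ _
    rw [Finset.sum_neg_distrib] at h1
    linarith
  set S : ℝ := ∑ k ∈ Finset.range N, 1 / L (k + 1) with hS
  have hSpos : 0 < S := by
    apply Finset.sum_pos
    · intro k hk
      have := hLpos k (Finset.mem_range.mp hk)
      positivity
    · exact Finset.nonempty_range_iff.mpr (by omega)
  have h2 : (-(∑ k ∈ Finset.range N, ψδ x (w k) / L (k + 1))) / S ≤
      (B (z 0) x + (δ + 2 * δt) * S) / S := by
    gcongr
  rw [add_div, mul_div_assoc, div_self (ne_of_gt hSpos), mul_one] at h2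
  calc -(1 / S) * ∑ k ∈ Finset.range N, ψδ x (w k) / L (k + 1)
      = (-(∑ k ∈ Finset.range N, ψδ x (w k) / L (k + 1))) / S := by ring
    _ ≤ B (z 0) x / S + (δ + 2 * δt) := h2
    _ = breg d Dd (z 0) x / S + δ + 2 * δt := by rw [hB]; ring
end
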